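/- Let d ≥ 1, let θ₀ > θ₁ > ... > θ_d be real numbers, let m₀,...,m_d be positive reals, and let P₀,...,P_d be real numbers satisfying mᵢ · Pᵢ · ∏_{j≠i}(θᵢ - θⱼ) = C for all i, where C > 0 is a fixed constant. Then for g ≠ h, P_g = P_h if and only if ∑ᵢ mᵢ ∏_{j∉{g,h}}(θᵢ - θⱼ) = 0. -/

import Mathlib

open Finset

theorem stmt0 (d : ℕ) (hd : 1 ≤ d) (θ m P : Fin (d + 1) → ℝ)
    (hθ : StrictAnti θ) (hm : ∀ i, 0 < m i) (C : ℝ) (hC : 0 < C)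
    (hP : ∀ i, m i * P i * ∏ j ∈ univ.erase i, (θ i - θ j) = C)
    (g h : Fin (d + 1)) (hgh : g ≠ h) :
    P g = P h ↔ ∑ i, m i * ∏ j ∈ univ \ {g, h}, (θ i - θ j) = 0 := by
  have injθ : Function.Injective θ := hθ.injective
  have hsub : ∀ i j : Fin (d + 1), i ≠ j → θ i - θ j ≠ 0 := fun i j hij =>
    sub_ne_zero.mpr fun e => hij (injθ e)
  have hPne : ∀ i, P i ≠ 0 := by
    intro i h0
    have h1 := hP i
    rw [h0, mul_zero, zero_mul] at h1
    exact hC.ne h1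
  have h1 := hP g
  have h2 := hP h
  set A := ∏ j ∈ univ.erase g, (θ g - θ j) with hA
  set B := ∏ j ∈ univ.erase h, (θ h - θ j) with hB
  set Q := ∏ j ∈ univ \ {g, h}, (θ g - θ j) with hQ
  set R := ∏ j ∈ univ \ {g, h}, (θ h - θ j) with hR
  have hBne : B ≠ 0 := by
    rw [hB]
    exact Finset.prod_ne_zero_iff.mpr fun j hj => hsub h j (Ne.symm (Finset.mem_erase.mp hj).1)
  have hhg : (h : Fin (d + 1)) ∉ univ \ ({g, h} : Finset (Fin (d + 1))) := by simp
  have hgg : (g : Fin (d + 1)) ∉ univ \ ({g, h} : Finset (Fin (d + 1))) := by simp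
  have e1 : (univ : Finset (Fin (d + 1))).erase g = insert h (univ \ {g, h}) := by
    ext x
    simp only [mem_erase, mem_insert, mem_sdiff, mem_univ, true_and, mem_singleton, not_or]
    have := hgh
    rcases eq_or_ne x g with rfl | hxg <;> rcases eq_or_ne x h with rfl | hxh <;> simp_all
  have e2 : (univ : Finset (Fin (d + 1))).erase h = insert g (univ \ {g, h}) := by
    ext x
    simp only [mem_erase, mem_insert, mem_sdiff, mem_univ, true_and, mem_singleton, not_or]
    have := hgh
    rcases eq_or_ne x g with rfl | hxg <;> rcases eq_or_ne x h with rfl | hxh <;> simp_all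
  have hAQ : A = (θ g - θ h) * Q := by rw [hA, hQ, e1, Finset.prod_insert hhg]
  have hBR : B = (θ h - θ g) * R := by rw [hB, hR, e2, Finset.prod_insert hgg]
  have hsum : ∑ i, m i * ∏ j ∈ univ \ {g, h}, (θ i - θ j) = m g * Q + m h * R := by
    rw [hQ, hR]
    rw [← Finset.sum_subset (Finset.subset_univ ({g, h} : Finset (Fin (d + 1))))
      (fun i _ hi => by
        rw [Finset.prod_eq_zero (Finset.mem_sdiff.mpr ⟨Finset.mem_univ i, hi⟩) (sub_self (θ i)),
          mul_zero])]
    exact Finset.sum_pair hgh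
  rw [hsum]
  have hgh' : θ g - θ h ≠ 0 := hsub g h hgh
  constructor
  · intro hPgh
    have hAB : m g * A = m h * B := by
      have hc : (m g * A) * P g = (m h * B) * P g := by
        linear_combination h1 - h2 - (m h * B) * hPgh
      exact mul_right_cancel₀ (hPne g) hc
    have hz : (θ g - θ h) * (m g * Q + m h * R) = 0 := by
      rw [hAQ, hBR] at hAB
      linear_combination hAB
    exact (mul_eq_zero.mp hz).resolve_left hgh'
  · intro hsum0
    have hAB : m g * A = m h * B := by
      rw [hAQ, hBR]
      linear_combination (θ g - θ h) * hsum0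
    have hc : (m h * B) * P g = (m h * B) * P h := by
      linear_combination h1 - h2 - P g * hAB
    exact mul_left_cancel₀ (mul_ne_zero (hm h).ne' hBne) hc
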